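/- arXiv:2006.07697 — 4 statements merged into one kernel-verified Lean document; each statement's English description precedes it below -/
import Mathlib

section
/- Let H be an M×n real matrix, W an M×M real matrix, and suppose HᵀWH is invertible. Define the weighted least-squares state estimate θ̂(z) = (HᵀWH)⁻¹HᵀW z and the bad-data residual r(z) = ‖z − H θ̂(z)‖ (Euclidean norm). Then for any measurement vector z ∈ ℝᴹ and any c ∈ ℝⁿ, the false data injection attack a = Hc leaves the residual unchanged: r(z + Hc) = r(z). -/
open Matrix

/-- An FDI attack of the form `a = H c` leaves the BDD residual unchanged. -/
theorem fdi_attack_residual_invariant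
    (M n : ℕ) (H : Matrix (Fin M) (Fin n) ℝ) (W : Matrix (Fin M) (Fin M) ℝ)
    (hinv : IsUnit (Hᵀ * W * H).det)
    (est : (Fin M → ℝ) → (Fin n → ℝ))
    (hest : ∀ z, est z = (Hᵀ * W * H)⁻¹ *ᵥ (Hᵀ *ᵥ (W *ᵥ z)))
    (r : (Fin M → ℝ) → ℝ)
    (hr : ∀ z, r z = ‖(EuclideanSpace.equiv (Fin M) ℝ).symm (z - H *ᵥ est z)‖) :
    ∀ (z : Fin M → ℝ) (c : Fin n → ℝ), r (z + H *ᵥ c) = r z := by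
  intro z c
  have hest2 : est (z + H *ᵥ c) = est z + c := by
    rw [hest, hest]
    have h1 : Hᵀ *ᵥ (W *ᵥ (z + H *ᵥ c)) =
        Hᵀ *ᵥ (W *ᵥ z) + (Hᵀ * W * H) *ᵥ c := by
      rw [mulVec_add, mulVec_add]
      simp [mulVec_mulVec, Matrix.mul_assoc]
    rw [h1, mulVec_add]
    simp only [mulVec_mulVec]
    rw [Matrix.nonsing_inv_mul _ hinv, one_mulVec]
  rw [hr, hr, hest2]
  congr 1
  rw [mulVec_add]
  abel
end

section
/- Let H be an M×n real matrix, W an M×M real matrix with HᵀWH invertible, and let r(z) = ‖z − H(HᵀWH)⁻¹HᵀW z‖ be the BDD residual. Fix a state θ ∈ ℝⁿ, a threshold τ > 0, and let μ be any probability measure on ℝᴹ modeling the sensor noise n. Then for every c ∈ ℝⁿ, the detection probability of the attack a = Hc equals the false positive rate: μ{n : r(Hθ + n + Hc) > τ} = μ{n : r(Hθ + n) > τ}. -/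
open Matrix

/-- For noise distributed according to a probability measure `μ`, the detection
probability of an undetectable FDI attack `a = H c` equals the false positive rate. -/
theorem fdi_attack_detection_prob_eq_false_positive_rate
    (M n : ℕ) (H : Matrix (Fin M) (Fin n) ℝ) (W : Matrix (Fin M) (Fin M) ℝ)
    (hinv : IsUnit (Hᵀ * W * H).det)
    (r : (Fin M → ℝ) → ℝ)
    (hr : ∀ z, r z = ‖(EuclideanSpace.equiv (Fin M) ℝ).symm
        (z - H *ᵥ ((Hᵀ * W * H)⁻¹ *ᵥ (Hᵀ *ᵥ (W *ᵥ z))))‖)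
    (θ : Fin n → ℝ) (τ : ℝ) (hτ : 0 < τ)
    (μ : MeasureTheory.Measure (Fin M → ℝ)) [MeasureTheory.IsProbabilityMeasure μ] :
    ∀ c : Fin n → ℝ,
      μ {nv : Fin M → ℝ | r (H *ᵥ θ + nv + H *ᵥ c) > τ} =
      μ {nv : Fin M → ℝ | r (H *ᵥ θ + nv) > τ} := by
  intro c
  have key : ∀ z : Fin M → ℝ, r (z + H *ᵥ c) = r z := by
    intro z
    rw [hr, hr]
    congr 1
    have hc : (Hᵀ * W * H)⁻¹ *ᵥ ((Hᵀ * W * H) *ᵥ c) = c := by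
      rw [mulVec_mulVec, Matrix.nonsing_inv_mul _ hinv, one_mulVec]
    have expand : Hᵀ *ᵥ (W *ᵥ (z + H *ᵥ c))
        = Hᵀ *ᵥ (W *ᵥ z) + (Hᵀ * W * H) *ᵥ c := by
      rw [mulVec_add, mulVec_add]
      simp [mulVec_mulVec, Matrix.mul_assoc]
    rw [expand, mulVec_add, hc, mulVec_add]
    abel
  congr 1
  ext nv
  simp [key (H *ᵥ θ + nv)]
end

section
/- Every finite two-player zero-sum game has a mixed-strategy Nash equilibrium: for any real matrix A of size m×n, there exist probability vectors p* ∈ Δ_m and q* ∈ Δ_n such that for all p ∈ Δ_m and q ∈ Δ_n, u(p, q*) ≤ u(p*, q*) ≤ u(p*, q), where u(p,q) = Σ_{i,j} p_i A_{ij} q_j. -/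
/-- The uniform distribution lies in the standard simplex. -/
lemma unif_mem_stdSimplex (k : ℕ) (hk : 0 < k) :
    (fun _ => (k : ℝ)⁻¹) ∈ stdSimplex ℝ (Fin k) := by
  constructor
  · intro i; positivity
  · simp [Finset.sum_const, Finset.card_univ]
    field_simp

/-- Key alternative lemma via hyperplane separation: if no mixed column strategy makes
`B.mulVec q` strictly negative in every coordinate, then there is a mixed row strategy `p`
with `pᵀ B q ≥ 0` for all mixed `q`. -/
lemma exists_row_strategy (m n : ℕ) (hm : 0 < m) (hn : 0 < n)
    (B : Matrix (Fin m) (Fin n) ℝ)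
    (hB : ∀ q ∈ stdSimplex ℝ (Fin n), ∃ i, 0 ≤ B.mulVec q i) :
    ∃ p ∈ stdSimplex ℝ (Fin m), ∀ q ∈ stdSimplex ℝ (Fin n),
      0 ≤ ∑ i, ∑ j, p i * B i j * q j := by
  set s : Set (Fin m → ℝ) := Set.univ.pi fun _ => Set.Iio (0 : ℝ) with hs_def
  set t : Set (Fin m → ℝ) := B.mulVecLin '' stdSimplex ℝ (Fin n) with ht_def
  have hs_open : IsOpen s := isOpen_set_pi Set.finite_univ (fun _ _ => isOpen_Iio)
  have hs_conv : Convex ℝ s := convex_pi (fun _ _ => convex_Iio 0)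
  have ht_conv : Convex ℝ t := (convex_stdSimplex ℝ (Fin n)).linear_image B.mulVecLin
  have hdisj : Disjoint s t := by
    rw [Set.disjoint_left]
    rintro x hx ⟨q, hq, rfl⟩
    obtain ⟨i, hi⟩ := hB q hq
    have := hx i (Set.mem_univ i)
    simp only [Set.mem_Iio] at this
    exact absurd hi (by simpa using not_le.2 this)
  obtain ⟨f, c, hf1, hf2⟩ := geometric_hahn_banach_open hs_conv hs_open ht_conv hdisj
  set p : Fin m → ℝ := fun i => f (Pi.single i 1) with hp_def
  have hfx : ∀ x : Fin m → ℝ, f x = ∑ i, x i * p i := by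
    intro x
    conv_lhs => rw [pi_eq_sum_univ x]
    rw [map_sum]
    refine Finset.sum_congr rfl fun i _ => ?_
    rw [map_smul, smul_eq_mul]
    simp only [hp_def]
    have hsingle : (fun j => if i = j then (1:ℝ) else 0) = Pi.single i 1 := by
      funext j
      simp [Pi.single_apply, eq_comm]
    rw [hsingle]
  -- p is nonnegative
  have hp_nonneg : ∀ i, 0 ≤ p i := by
    intro i
    by_contra hneg
    push_neg at hneg
    set S : ℝ := ∑ j, p j with hS
    set T : ℝ := max 0 ((c + S + 1) / (-p i)) with hT
    have hT_pos : 0 ≤ T := le_max_left _ _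
    have hpos : (0:ℝ) < -p i := by linarith
    have hkey : c + S + 1 ≤ T * (-p i) := by
      have h1 : (c + S + 1) / (-p i) ≤ T := le_max_right _ _
      have h2 : (c + S + 1) / (-p i) * (-p i) ≤ T * (-p i) :=
        mul_le_mul_of_nonneg_right h1 hpos.le
      rwa [div_mul_cancel₀ _ hpos.ne'] at h2
    set x : Fin m → ℝ := fun j => -1 - T * (if j = i then 1 else 0) with hx_def
    have hxs : x ∈ s := by
      intro j _
      simp only [Set.mem_Iio, hx_def]
      rcases eq_or_ne j i with rfl | hji
      · simp; linarith
      · simp [hji]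
    have hfx_val : f x = -S - T * p i := by
      rw [hfx]
      have hterm : ∀ j, x j * p j = -p j - (if j = i then T * p i else 0) := by
        intro j
        rcases eq_or_ne j i with rfl | hji
        · simp [hx_def]; ring
        · simp [hx_def, hji]
      simp only [hterm]
      rw [Finset.sum_sub_distrib, Finset.sum_ite_eq' Finset.univ i (fun _ => T * p i)]
      simp [hS]
    have h1 := hf1 x hxs
    rw [hfx_val] at h1
    nlinarith [hkey]
  -- c is nonnegative
  have hc_nonneg : 0 ≤ c := by
    by_contra hc
    push_neg at hc
    set S : ℝ := ∑ j, p j with hS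
    have hS_nonneg : 0 ≤ S := Finset.sum_nonneg fun j _ => hp_nonneg j
    set ε : ℝ := -c / (S + 1) with hε
    have hS1 : (0:ℝ) < S + 1 := by linarith
    have hε_pos : 0 < ε := div_pos (by linarith) hS1
    have hxs : (fun _ : Fin m => -ε) ∈ s := fun j _ => by
      simp only [Set.mem_Iio]; linarith
    have h1 : -(ε * S) < c := by
      have h := hf1 _ hxs
      rw [hfx] at h
      calc -(ε * S) = ∑ j, (-ε) * p j := by
            rw [hS, Finset.mul_sum, ← Finset.sum_neg_distrib]
            exact Finset.sum_congr rfl fun j _ => by ring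
        _ < c := h
    have hεe : ε * (S + 1) = -c := by
      rw [hε]; field_simp
    nlinarith [hεe, hε_pos, h1]
  -- sum of p is positive
  have hq0 : (fun _ => (n : ℝ)⁻¹) ∈ stdSimplex ℝ (Fin n) := unif_mem_stdSimplex n hn
  have hS_pos : 0 < ∑ j, p j := by
    rcases (Finset.sum_nonneg fun j (_ : j ∈ Finset.univ) => hp_nonneg j).lt_or_eq with h | h
    · exact h
    · exfalso
      have hall : ∀ j, p j = 0 := by
        intro j
        have := (Finset.sum_eq_zero_iff_of_nonneg fun j _ => hp_nonneg j).mp h.symm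
        exact this j (Finset.mem_univ j)
      have hf0 : ∀ x, f x = 0 := by
        intro x; rw [hfx]; simp [hall]
      have h1 := hf1 (fun _ => -1) (fun j _ => by simp)
      have h2 := hf2 _ ⟨_, hq0, rfl⟩
      rw [hf0] at h1 h2
      linarith
  set S : ℝ := ∑ j, p j with hS
  refine ⟨fun i => p i / S, ⟨fun i => div_nonneg (hp_nonneg i) hS_pos.le, ?_⟩, ?_⟩
  · rw [← Finset.sum_div, ← hS, div_self hS_pos.ne']
  · intro q hq
    have h2 := hf2 _ ⟨q, hq, rfl⟩
    rw [hfx] at h2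
    have hval : ∑ i, B.mulVecLin q i * p i = ∑ i, ∑ j, p i * B i j * q j := by
      refine Finset.sum_congr rfl fun i _ => ?_
      simp only [Matrix.mulVecLin_apply, Matrix.mulVec, dotProduct]
      rw [Finset.sum_mul]
      exact Finset.sum_congr rfl fun j _ => by ring
    rw [hval] at h2
    have hge : 0 ≤ ∑ i, ∑ j, p i * B i j * q j := le_trans hc_nonneg h2
    have : ∑ i, ∑ j, p i / S * B i j * q j = (∑ i, ∑ j, p i * B i j * q j) / S := by
      rw [Finset.sum_div]
      refine Finset.sum_congr rfl fun i _ => ?_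
      rw [Finset.sum_div]
      exact Finset.sum_congr rfl fun j _ => by ring
    rw [this]
    positivity

/-- Every finite two-player zero-sum game has a mixed-strategy Nash
equilibrium (a saddle point of the mixed extension). -/
theorem zero_sum_game_has_mixed_nash_equilibrium
    (m n : ℕ) (hm : 0 < m) (hn : 0 < n) (A : Matrix (Fin m) (Fin n) ℝ)
    (u : (Fin m → ℝ) → (Fin n → ℝ) → ℝ)
    (hu : ∀ p q, u p q = ∑ i, ∑ j, p i * A i j * q j) :
    ∃ p ∈ stdSimplex ℝ (Fin m), ∃ q ∈ stdSimplex ℝ (Fin n),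
      ∀ p' ∈ stdSimplex ℝ (Fin m), ∀ q' ∈ stdSimplex ℝ (Fin n),
        u p' q ≤ u p q ∧ u p q ≤ u p q' := by
  haveI : Nonempty (Fin m) := Fin.pos_iff_nonempty.mp hm
  have hmne : (Finset.univ : Finset (Fin m)).Nonempty := Finset.univ_nonempty
  -- g q = max_i (A q)_i
  set g : (Fin n → ℝ) → ℝ :=
    fun q => Finset.univ.sup' hmne (fun i => ∑ j, A i j * q j) with hg_def
  have hg_cont : Continuous g := by
    have hg_eq : g = Finset.univ.sup' hmne (fun i (q : Fin n → ℝ) => ∑ j, A i j * q j) := by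
      funext q
      exact (Finset.sup'_apply hmne (fun i (q : Fin n → ℝ) => ∑ j, A i j * q j) q).symm
    rw [hg_eq]
    exact Continuous.finset_sup' hmne fun i _ =>
      continuous_finset_sum _ fun j _ => continuous_const.mul (continuous_apply j)
  have hΔn_ne : (stdSimplex ℝ (Fin n)).Nonempty := ⟨_, unif_mem_stdSimplex n hn⟩
  obtain ⟨qstar, hqstar, hqmin⟩ :=
    (isCompact_stdSimplex ℝ (Fin n)).exists_isMinOn hΔn_ne hg_cont.continuousOn
  set v : ℝ := g qstar with hv
  set B : Matrix (Fin m) (Fin n) ℝ := fun i j => A i j - v with hB_def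
  have hsum1 : ∀ q : Fin n → ℝ, q ∈ stdSimplex ℝ (Fin n) → ∑ j, q j = 1 := fun q hq => hq.2
  have hB : ∀ q ∈ stdSimplex ℝ (Fin n), ∃ i, 0 ≤ B.mulVec q i := by
    intro q hq
    obtain ⟨i, _, hi⟩ := Finset.exists_mem_eq_sup' hmne (fun i => ∑ j, A i j * q j)
    refine ⟨i, ?_⟩
    have hgq : v ≤ g q := hqmin hq
    simp only [hg_def] at hgq
    rw [hi] at hgq
    simp only [Matrix.mulVec, dotProduct, hB_def]
    have heq2 : ∑ j, (A i j - v) * q j = (∑ j, A i j * q j) - v * ∑ j, q j := by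
      rw [Finset.mul_sum, ← Finset.sum_sub_distrib]
      exact Finset.sum_congr rfl fun j _ => by ring
    rw [heq2, hsum1 q hq]
    linarith
  obtain ⟨pstar, hpstar, hpB⟩ := exists_row_strategy m n hm hn B hB
  -- expansion: for p, q in simplices, Σij p_i B_ij q_j = u p q - v
  have hexp : ∀ p q, p ∈ stdSimplex ℝ (Fin m) → q ∈ stdSimplex ℝ (Fin n) →
      ∑ i, ∑ j, p i * B i j * q j = u p q - v := by
    intro p q hp hq
    rw [hu]
    have hterm : ∀ i, ∑ j, p i * B i j * q j
        = (∑ j, p i * A i j * q j) - p i * v * ∑ j, q j := by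
      intro i
      rw [Finset.mul_sum, ← Finset.sum_sub_distrib]
      refine Finset.sum_congr rfl fun j _ => ?_
      simp only [hB_def]; ring
    calc ∑ i, ∑ j, p i * B i j * q j
        = ∑ i, ((∑ j, p i * A i j * q j) - p i * v * ∑ j, q j) :=
          Finset.sum_congr rfl fun i _ => hterm i
      _ = (∑ i, ∑ j, p i * A i j * q j) - ∑ i, p i * v * ∑ j, q j := by
          rw [Finset.sum_sub_distrib]
      _ = (∑ i, ∑ j, p i * A i j * q j) - v := by
          congr 1
          rw [hsum1 q hq]
          simp only [mul_one]
          rw [← Finset.sum_mul, hp.2, one_mul]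
  refine ⟨pstar, hpstar, qstar, hqstar, ?_⟩
  -- u p' qstar ≤ v for all p' in simplex
  have hub : ∀ p' ∈ stdSimplex ℝ (Fin m), u p' qstar ≤ v := by
    intro p' hp'
    rw [hu]
    calc ∑ i, ∑ j, p' i * A i j * qstar j = ∑ i, p' i * ∑ j, A i j * qstar j := by
          refine Finset.sum_congr rfl fun i _ => ?_
          rw [Finset.mul_sum]
          exact Finset.sum_congr rfl fun j _ => by ring
      _ ≤ ∑ i, p' i * v := by
          refine Finset.sum_le_sum fun i _ => ?_
          exact mul_le_mul_of_nonneg_left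
            (Finset.le_sup' (fun i => ∑ j, A i j * qstar j) (Finset.mem_univ i)) (hp'.1 i)
      _ = v := by rw [← Finset.sum_mul, hp'.2, one_mul]
  -- v ≤ u pstar q' for all q' in simplex
  have hlb : ∀ q' ∈ stdSimplex ℝ (Fin n), v ≤ u pstar q' := by
    intro q' hq'
    have := hpB q' hq'
    rw [hexp pstar q' hpstar hq'] at this
    linarith
  have heq : u pstar qstar = v :=
    le_antisymm (hub pstar hpstar) (hlb qstar hqstar)
  intro p' hp' q' hq'
  exact ⟨(hub p' hp').trans heq.ge, heq.trans_le (hlb q' hq')⟩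
end

section
/- For any real matrix A of size m×n, the minimax equality holds over mixed strategies: sup over p ∈ Δ_m of (inf over q ∈ Δ_n of u(p,q)) = inf over q ∈ Δ_n of (sup over p ∈ Δ_m of u(p,q)), where u(p,q) = Σ_{i,j} p_i A_{ij} q_j; this common value is the value of the zero-sum game. -/
open Finset Set Matrix

section Aux

variable {k : ℕ}

lemma aux_sum_mul_le_sup' [Nonempty (Fin k)] (x w : Fin k → ℝ)
    (hw : w ∈ stdSimplex ℝ (Fin k)) :
    ∑ i, x i * w i ≤ Finset.univ.sup' Finset.univ_nonempty x := by
  calc ∑ i, x i * w i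
      ≤ ∑ i, (Finset.univ.sup' Finset.univ_nonempty x) * w i := by
        refine Finset.sum_le_sum fun i _ => ?_
        exact mul_le_mul_of_nonneg_right (Finset.le_sup' x (Finset.mem_univ i)) (hw.1 i)
    _ = Finset.univ.sup' Finset.univ_nonempty x := by
        rw [← Finset.mul_sum, hw.2, mul_one]

lemma aux_inf'_le_sum_mul [Nonempty (Fin k)] (x w : Fin k → ℝ)
    (hw : w ∈ stdSimplex ℝ (Fin k)) :
    Finset.univ.inf' Finset.univ_nonempty x ≤ ∑ i, x i * w i := by
  calc Finset.univ.inf' Finset.univ_nonempty x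
      = ∑ i, (Finset.univ.inf' Finset.univ_nonempty x) * w i := by
        rw [← Finset.mul_sum, hw.2, mul_one]
    _ ≤ ∑ i, x i * w i := by
        refine Finset.sum_le_sum fun i _ => ?_
        exact mul_le_mul_of_nonneg_right (Finset.inf'_le x (Finset.mem_univ i)) (hw.1 i)

lemma aux_sum_mul_single (x : Fin k → ℝ) (i₀ : Fin k) :
    ∑ i, x i * (Pi.single i₀ (1:ℝ) : Fin k → ℝ) i = x i₀ := by
  simp [Pi.single_apply]

end Aux

/-- Theorem of the alternative for matrix games, proved by separating hyperplanes. -/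
lemma aux_dichotomy {m n : ℕ} (hm : 0 < m) (hn : 0 < n) (B : Matrix (Fin m) (Fin n) ℝ) :
    (∃ q ∈ stdSimplex ℝ (Fin n), ∀ i, (B *ᵥ q) i ≤ 0) ∨
    (∃ p ∈ stdSimplex ℝ (Fin m), ∀ q ∈ stdSimplex ℝ (Fin n),
      0 < ∑ i, p i * (B *ᵥ q) i) := by
  by_cases h : ∃ q ∈ stdSimplex ℝ (Fin n), ∀ i, (B *ᵥ q) i ≤ 0
  · exact Or.inl h
  right
  push_neg at h
  set K : Set (Fin m → ℝ) := B.mulVecLin '' stdSimplex ℝ (Fin n) with hK_def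
  set O : Set (Fin m → ℝ) := Set.univ.pi (fun _ : Fin m => Iic (0:ℝ)) with hO_def
  have hKconv : Convex ℝ K := (convex_stdSimplex ℝ _).linear_image B.mulVecLin
  have hKcomp : IsCompact K :=
    (isCompact_stdSimplex ℝ _).image B.mulVecLin.continuous_of_finiteDimensional
  have hOconv : Convex ℝ O := convex_pi fun i _ => convex_Iic 0
  have hOclosed : IsClosed O := isClosed_set_pi fun i _ => isClosed_Iic
  have hdisj : Disjoint K O := by
    rw [Set.disjoint_left]
    rintro y ⟨q, hq, rfl⟩ hy
    obtain ⟨i, hi⟩ := h q hq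
    have := hy i (Set.mem_univ i)
    rw [Matrix.mulVecLin_apply] at this
    exact absurd this (not_le.mpr hi)
  obtain ⟨f, u, v, hfK, huv, hfO⟩ :=
    geometric_hahn_banach_compact_closed hKconv hKcomp hOconv hOclosed hdisj
  have hv0 : v < 0 := by
    have h0 : (0 : Fin m → ℝ) ∈ O := by
      intro i _
      simp
    have := hfO 0 h0
    simpa using this
  have hfe : ∀ i, f (Pi.single i 1 : Fin m → ℝ) ≤ 0 := by
    intro i
    by_contra hc
    push_neg at hc
    set c := f (Pi.single i 1 : Fin m → ℝ) with hc_def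
    set t := (1 - v) / c with ht_def
    have ht : 0 ≤ t := div_nonneg (by linarith) hc.le
    have hmem : (-(t • (Pi.single i 1 : Fin m → ℝ))) ∈ O := by
      intro i' _
      simp only [Pi.neg_apply, Pi.smul_apply, smul_eq_mul, Set.mem_Iic]
      rw [Pi.single_apply]
      by_cases hii : i' = i <;> simp [hii, ht]
    have hlt := hfO _ hmem
    rw [map_neg, _root_.map_smul, smul_eq_mul, ← hc_def] at hlt
    have htc : t * c = 1 - v := div_mul_cancel₀ _ hc.ne'
    rw [htc] at hlt
    linarith
  set p₀ : Fin m → ℝ := fun i => -f (Pi.single i 1 : Fin m → ℝ) with hp₀_def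
  have hp₀ : ∀ i, 0 ≤ p₀ i := fun i => neg_nonneg.mpr (hfe i)
  have hfy : ∀ y : Fin m → ℝ, f y = -∑ i, p₀ i * y i := by
    intro y
    have hy : (∑ i, y i • (Pi.single i 1 : Fin m → ℝ)) = y := by
      funext j
      simp [Finset.sum_apply, Pi.single_apply]
    calc f y = f (∑ i, y i • (Pi.single i 1 : Fin m → ℝ)) := by rw [hy]
      _ = ∑ i, y i * f (Pi.single i 1 : Fin m → ℝ) := by
          rw [map_sum]; simp [smul_eq_mul]
      _ = -∑ i, p₀ i * y i := by
          rw [← Finset.sum_neg_distrib]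
          refine Finset.sum_congr rfl fun i _ => ?_
          simp [hp₀_def]; ring
  have hq0 : ∀ q ∈ stdSimplex ℝ (Fin n), 0 < ∑ i, p₀ i * (B *ᵥ q) i := by
    intro q hq
    have hlt : f (B *ᵥ q) < u := hfK _ ⟨q, hq, rfl⟩
    rw [hfy] at hlt
    linarith
  set s := ∑ i, p₀ i with hs_def
  have hspos : 0 < s := by
    rcases lt_or_ge 0 s with h' | h'
    · exact h'
    exfalso
    have hz : ∀ i ∈ Finset.univ, p₀ i = 0 := by
      rw [← Finset.sum_eq_zero_iff_of_nonneg (fun i _ => hp₀ i)]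
      exact le_antisymm h' (Finset.sum_nonneg fun i _ => hp₀ i)
    have hq := hq0 _ (single_mem_stdSimplex ℝ (⟨0, hn⟩ : Fin n))
    rw [Finset.sum_eq_zero (fun i _ => by rw [hz i (Finset.mem_univ i), zero_mul])] at hq
    exact lt_irrefl 0 hq
  refine ⟨fun i => p₀ i / s, ⟨fun i => div_nonneg (hp₀ i) hspos.le, ?_⟩, ?_⟩
  · rw [← Finset.sum_div, ← hs_def, div_self hspos.ne']
  · intro q hq
    have h1 := hq0 q hq
    have h2 : ∑ i, p₀ i / s * (B *ᵥ q) i = (∑ i, p₀ i * (B *ᵥ q) i) / s := by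
      rw [Finset.sum_div]
      exact Finset.sum_congr rfl fun i _ => by ring
    rw [h2]
    exact div_pos h1 hspos

/-- The minimax equality for finite two-player zero-sum games over mixed
strategies: `sup_p inf_q u(p,q) = inf_q sup_p u(p,q)`; the common value is the value of
the game. -/
theorem zero_sum_game_minimax_equality
    (m n : ℕ) (hm : 0 < m) (hn : 0 < n) (A : Matrix (Fin m) (Fin n) ℝ)
    (u : (Fin m → ℝ) → (Fin n → ℝ) → ℝ)
    (hu : ∀ p q, u p q = ∑ i, ∑ j, p i * A i j * q j) :
    (⨆ p : stdSimplex ℝ (Fin m), ⨅ q : stdSimplex ℝ (Fin n), u p q) =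
      ⨅ q : stdSimplex ℝ (Fin n), ⨆ p : stdSimplex ℝ (Fin m), u p q := by
  haveI : Nonempty (Fin m) := ⟨⟨0, hm⟩⟩
  haveI : Nonempty (Fin n) := ⟨⟨0, hn⟩⟩
  haveI : Nonempty (stdSimplex ℝ (Fin m)) :=
    ⟨⟨_, single_mem_stdSimplex ℝ (Classical.arbitrary (Fin m))⟩⟩
  haveI : Nonempty (stdSimplex ℝ (Fin n)) :=
    ⟨⟨_, single_mem_stdSimplex ℝ (Classical.arbitrary (Fin n))⟩⟩
  have hu1 : ∀ p q, u p q = ∑ i, p i * (A *ᵥ q) i := by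
    intro p q
    rw [hu]
    refine Finset.sum_congr rfl fun i _ => ?_
    rw [Matrix.mulVec, dotProduct, Finset.mul_sum]
    exact Finset.sum_congr rfl fun j _ => by ring
  have hu2 : ∀ p q, u p q = ∑ j, (∑ i, p i * A i j) * q j := by
    intro p q
    rw [hu, Finset.sum_comm]
    exact Finset.sum_congr rfl fun j _ => by rw [Finset.sum_mul]
  set g : (Fin m → ℝ) → ℝ :=
    fun p => Finset.univ.inf' Finset.univ_nonempty (fun j => ∑ i, p i * A i j) with hg_def
  set h : (Fin n → ℝ) → ℝ :=
    fun q => Finset.univ.sup' Finset.univ_nonempty (fun i => (A *ᵥ q) i) with hh_def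
  have hgle : ∀ p ∈ stdSimplex ℝ (Fin m), ∀ q ∈ stdSimplex ℝ (Fin n), g p ≤ u p q := by
    intro p hp q hq
    rw [hu2]
    exact aux_inf'_le_sum_mul _ _ hq
  have hhle : ∀ p ∈ stdSimplex ℝ (Fin m), ∀ q ∈ stdSimplex ℝ (Fin n), u p q ≤ h q := by
    intro p hp q hq
    have : u p q = ∑ i, (A *ᵥ q) i * p i := by
      rw [hu1]
      exact Finset.sum_congr rfl fun i _ => by ring
    rw [this]
    exact aux_sum_mul_le_sup' _ _ hp
  -- inner inf equals g
  have hinner_inf : ∀ p : stdSimplex ℝ (Fin m),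
      (⨅ q : stdSimplex ℝ (Fin n), u p q) = g (p : Fin m → ℝ) := by
    intro p
    have hleast : IsLeast (Set.range fun q : stdSimplex ℝ (Fin n) => u p q)
        (g (p : Fin m → ℝ)) := by
      constructor
      · obtain ⟨j₀, -, hj₀⟩ :=
          Finset.exists_mem_eq_inf' (Finset.univ_nonempty (α := Fin n))
            (fun j => ∑ i, (p : Fin m → ℝ) i * A i j)
        refine ⟨⟨(Pi.single j₀ 1 : Fin n → ℝ), single_mem_stdSimplex ℝ j₀⟩, ?_⟩
        show u (p : Fin m → ℝ) (Pi.single j₀ 1 : Fin n → ℝ) = g (p : Fin m → ℝ)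
        rw [hu2, aux_sum_mul_single (fun j => ∑ i, (p : Fin m → ℝ) i * A i j) j₀]
        simp only [hg_def]
        exact hj₀.symm
      · rintro x ⟨q, rfl⟩
        exact hgle _ p.2 _ q.2
    exact (hleast.isGLB).ciInf_eq
  -- inner sup equals h
  have hinner_sup : ∀ q : stdSimplex ℝ (Fin n),
      (⨆ p : stdSimplex ℝ (Fin m), u p q) = h (q : Fin n → ℝ) := by
    intro q
    have hgreat : IsGreatest (Set.range fun p : stdSimplex ℝ (Fin m) => u p q)
        (h (q : Fin n → ℝ)) := by
      constructor
      · obtain ⟨i₀, -, hi₀⟩ :=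
          Finset.exists_mem_eq_sup' (Finset.univ_nonempty (α := Fin m))
            (fun i => (A *ᵥ (q : Fin n → ℝ)) i)
        refine ⟨⟨(Pi.single i₀ 1 : Fin m → ℝ), single_mem_stdSimplex ℝ i₀⟩, ?_⟩
        show u (Pi.single i₀ 1 : Fin m → ℝ) (q : Fin n → ℝ) = h (q : Fin n → ℝ)
        have : u (Pi.single i₀ 1 : Fin m → ℝ) (q : Fin n → ℝ) =
            ∑ i, (A *ᵥ (q : Fin n → ℝ)) i * (Pi.single i₀ 1 : Fin m → ℝ) i := by
          rw [hu1]
          exact Finset.sum_congr rfl fun i _ => by ring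
        rw [this, aux_sum_mul_single (fun i => (A *ᵥ (q : Fin n → ℝ)) i) i₀]
        simp only [hh_def]
        exact hi₀.symm
      · rintro x ⟨p, rfl⟩
        exact hhle _ p.2 _ q.2
    exact (hgreat.isLUB).ciSup_eq
  -- continuity of g and h
  have hgcont : Continuous g := by
    rw [continuous_iff_continuousAt]
    intro p
    refine ContinuousAt.finset_inf'_apply _ fun j _ => ?_
    exact (continuous_finset_sum _ fun i _ =>
      ((continuous_apply i).mul continuous_const)).continuousAt
  have hhcont : Continuous h := by
    rw [continuous_iff_continuousAt]
    intro q
    refine ContinuousAt.finset_sup'_apply _ fun i _ => ?_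
    exact ((continuous_apply i).comp
      (A.mulVecLin.continuous_of_finiteDimensional)).continuousAt
  obtain ⟨pstar, hpstar, hpmax⟩ := (isCompact_stdSimplex ℝ (Fin m)).exists_isMaxOn
    ⟨_, single_mem_stdSimplex ℝ (Classical.arbitrary (Fin m))⟩ hgcont.continuousOn
  obtain ⟨qstar, hqstar, hqmin⟩ := (isCompact_stdSimplex ℝ (Fin n)).exists_isMinOn
    ⟨_, single_mem_stdSimplex ℝ (Classical.arbitrary (Fin n))⟩ hhcont.continuousOn
  have hpmax' : ∀ p ∈ stdSimplex ℝ (Fin m), g p ≤ g pstar := fun p hp =>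
    isMaxOn_iff.mp hpmax p hp
  have hqmin' : ∀ q ∈ stdSimplex ℝ (Fin n), h qstar ≤ h q := fun q hq =>
    isMinOn_iff.mp hqmin q hq
  have hL : (⨆ p : stdSimplex ℝ (Fin m), ⨅ q : stdSimplex ℝ (Fin n), u p q) = g pstar := by
    have hG : IsGreatest (Set.range fun p : stdSimplex ℝ (Fin m) =>
        ⨅ q : stdSimplex ℝ (Fin n), u p q) (g pstar) := by
      constructor
      · exact ⟨⟨pstar, hpstar⟩, hinner_inf _⟩
      · rintro x ⟨p, rfl⟩
        show (⨅ q : stdSimplex ℝ (Fin n), u (p : Fin m → ℝ) q) ≤ g pstar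
        rw [hinner_inf]
        exact hpmax' _ p.2
    exact hG.isLUB.ciSup_eq
  have hR : (⨅ q : stdSimplex ℝ (Fin n), ⨆ p : stdSimplex ℝ (Fin m), u p q) = h qstar := by
    have hLst : IsLeast (Set.range fun q : stdSimplex ℝ (Fin n) =>
        ⨆ p : stdSimplex ℝ (Fin m), u p q) (h qstar) := by
      constructor
      · exact ⟨⟨qstar, hqstar⟩, hinner_sup _⟩
      · rintro x ⟨q, rfl⟩
        show h qstar ≤ ⨆ p : stdSimplex ℝ (Fin m), u p (q : Fin n → ℝ)
        rw [hinner_sup]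
        exact hqmin' _ q.2
    exact hLst.isGLB.ciInf_eq
  rw [hL, hR]
  have heasy : g pstar ≤ h qstar :=
    (hgle _ hpstar _ hqstar).trans (hhle _ hpstar _ hqstar)
  have hhard : h qstar ≤ g pstar := by
    by_contra hcon
    push_neg at hcon
    set c : ℝ := (g pstar + h qstar) / 2 with hc_def
    have hc1 : g pstar < c := by rw [hc_def]; linarith
    have hc2 : c < h qstar := by rw [hc_def]; linarith
    set B : Matrix (Fin m) (Fin n) ℝ := fun i j => A i j - c with hB_def
    have hBval : ∀ q ∈ stdSimplex ℝ (Fin n), ∀ i, (B *ᵥ q) i = (A *ᵥ q) i - c := by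
      intro q hq i
      show (fun j => B i j) ⬝ᵥ q = (fun j => A i j) ⬝ᵥ q - c
      rw [dotProduct, dotProduct]
      calc ∑ j, B i j * q j = ∑ j, (A i j * q j - c * q j) :=
            Finset.sum_congr rfl fun j _ => by rw [hB_def]; ring
        _ = (∑ j, A i j * q j) - c * ∑ j, q j := by
            rw [Finset.sum_sub_distrib, Finset.mul_sum]
        _ = (∑ j, A i j * q j) - c := by rw [hq.2, mul_one]
    rcases aux_dichotomy hm hn B with ⟨q, hq, hqle⟩ | ⟨p, hp, hppos⟩
    · have hhq : h q ≤ c := by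
        simp only [hh_def]
        refine Finset.sup'_le _ _ fun i _ => ?_
        have h1 := hqle i
        rw [hBval q hq i] at h1
        linarith
      exact absurd (le_trans (hqmin' q hq) hhq) (not_le.mpr hc2)
    · have hgp : c ≤ g p := by
        simp only [hg_def]
        refine Finset.le_inf' _ _ fun j _ => ?_
        have hsingle := hppos _ (single_mem_stdSimplex ℝ j)
        have heq : ∑ i, p i * (B *ᵥ (Pi.single j 1 : Fin n → ℝ)) i
            = (∑ i, p i * A i j) - c := by
        -- each entry (B *ᵥ single j 1) i = B i j = A i j - c
          have h1 : ∀ i, (B *ᵥ (Pi.single j 1 : Fin n → ℝ)) i = A i j - c := by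
            intro i
            show (fun j' => B i j') ⬝ᵥ (Pi.single j 1 : Fin n → ℝ) = A i j - c
            rw [dotProduct]
            have := aux_sum_mul_single (fun j' => B i j') j
            rw [this, hB_def]
          calc ∑ i, p i * (B *ᵥ (Pi.single j 1 : Fin n → ℝ)) i
              = ∑ i, (p i * A i j - c * p i) :=
                Finset.sum_congr rfl fun i _ => by rw [h1 i]; ring
            _ = (∑ i, p i * A i j) - c * ∑ i, p i := by
                rw [Finset.sum_sub_distrib, Finset.mul_sum]
            _ = (∑ i, p i * A i j) - c := by rw [hp.2, mul_one]
        rw [heq] at hsingle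
        linarith
      exact absurd (lt_of_lt_of_le hc1 (hgp.trans (hpmax' p hp))) (lt_irrefl _)
  exact le_antisymm heasy hhard
end
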